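/- Define S_i = |U(H_i)| = Σ_{S ∈ U(H_i)} 1 counted as permutation families: S_i = (n-i)! - Σ_{j=0}^{n-t-i} C(n-t-i, j)·D(n-t-j) + t·Σ_{j=0}^{n-t-i} C(n-t-i, j)·D(n-t-i-j+1), interpreted as the number of permutations of [n] whose fixed-point set contains a member of H_i. Then the sequence (S_i) satisfies: if S_i < S_{i+1}, then S_{i+1} < S_{i+2}; consequently max_{2 ≤ i ≤ n-t-1} S_i = max{S_2, S_{n-t-1}}. -/

import Mathlib

open Finset

/-- The Frankl-type family `H_i` as subsets of `[n] = Icc 1 n`. -/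
def Hfam (t i : ℕ) : Finset (Finset ℕ) :=
  ((Finset.Icc 1 (t + i)).powersetCard (t + 1)).filter (fun S => Finset.Icc 1 t ⊆ S) ∪
    ((Finset.Icc 1 (t + i)).powersetCard (t + i - 1)).filter
      (fun S => Finset.Icc (t + 1) (t + i) ⊆ S)

open scoped Classical in
/-- `S_i`: the number of permutations of `[n]` whose fixed-point set contains a
member of `H_i`, computed as a sum of derangement numbers over the upward
closure of `H_i` in `2^[n]`. -/
noncomputable def Sfun (n t i : ℕ) : ℕ :=
  ∑ S ∈ ((Finset.Icc 1 n).powerset.filter (fun S => ∃ T ∈ Hfam t i, T ⊆ S)),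
    numDerangements (n - S.card)


set_option maxRecDepth 4000

open scoped Nat
open scoped Classical

/-- `Rv N s`: sum of derangement-number counts, equal to the number of permutations of an
`N`-set whose fixed points all lie in a given `s`-subset. -/
def Rv (N s : ℕ) : ℕ := ∑ j ∈ Finset.range (s+1), s.choose j * numDerangements (N - j)

lemma sum_pascal (g : ℕ → ℕ) (k : ℕ) :
    ∑ j ∈ Finset.range (k+2), (k+1).choose j * g j =
      ∑ j ∈ Finset.range (k+1), k.choose j * g j +
        ∑ j ∈ Finset.range (k+1), k.choose j * g (j+1) := by
  rw [Finset.sum_range_succ' (fun j => (k+1).choose j * g j) (k+1)]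
  have h1 : ∀ j ∈ Finset.range (k+1), (k+1).choose (j+1) * g (j+1) =
      k.choose j * g (j+1) + k.choose (j+1) * g (j+1) := by
    intro j _; rw [Nat.choose_succ_succ, add_mul]
  rw [Finset.sum_congr rfl h1, Finset.sum_add_distrib]
  have h2 : ∑ j ∈ Finset.range (k+1), k.choose (j+1) * g (j+1) + (k+1).choose 0 * g 0 =
      ∑ j ∈ Finset.range (k+1), k.choose j * g j := by
    have h3 := Finset.sum_range_succ' (fun j => k.choose j * g j) (k+1)
    rw [Finset.sum_range_succ, Nat.choose_succ_self, zero_mul, add_zero] at h3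
    rw [Nat.choose_zero_right] at h3 ⊢
    omega
  omega

lemma Rv_succ (N s : ℕ) : Rv N (s+1) = Rv N s + Rv (N-1) s := by
  unfold Rv
  rw [sum_pascal (fun j => numDerangements (N - j)) s]
  have : ∀ j ∈ Finset.range (s+1), s.choose j * numDerangements (N - (j+1)) =
      s.choose j * numDerangements (N - 1 - j) := by
    intro j _; rw [show N - (j+1) = N - 1 - j from by omega]
  rw [Finset.sum_congr rfl this]

lemma Rv_le_succ (N s : ℕ) : Rv N s ≤ Rv N (s+1) := by
  rw [Rv_succ]; exact Nat.le_add_right _ _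

lemma Rv_mono (N : ℕ) {s s' : ℕ} (h : s ≤ s') : Rv N s ≤ Rv N s' := by
  induction s' with
  | zero => simp [Nat.le_zero.mp h]
  | succ k ih =>
    rcases Nat.lt_or_ge s (k+1) with h'|h'
    · exact (ih (by omega)).trans (Rv_le_succ N k)
    · have : s = k+1 := by omega
      simp [this]

/-- Key auxiliary identity. -/
lemma Rv_eq_sum_mul (s : ℕ) : ∀ M : ℕ, 1 ≤ s → s ≤ M →
    Rv M s = ∑ j ∈ Finset.range (s+1), s.choose j * ((M - j) * numDerangements (M - 1 - j)) := by
  induction s with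
  | zero => omega
  | succ k ih =>
    intro M hs hsM
    rcases Nat.eq_or_lt_of_le hs with h1 | h1
    · -- k = 0
      have hk : k = 0 := by omega
      subst hk
      unfold Rv
      simp only [Finset.sum_range_succ, Finset.sum_range_zero, Nat.choose_zero_right,
        Nat.choose_one_right, one_mul, Nat.sub_zero, zero_add]
      rcases Nat.lt_or_ge M 2 with hM | hM
      · interval_cases M <;> simp [numDerangements_one, numDerangements_zero]
      · obtain ⟨p, rfl⟩ : ∃ p, M = p + 2 := ⟨M - 2, by omega⟩
        have h := numDerangements_add_two p
        simp only [Nat.add_sub_cancel, show p+2-1 = p+1 by omega, show p+2-1-1 = p by omega]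
        rw [h]; ring
    · have hk1 : 1 ≤ k := by omega
      rw [Rv_succ, ih M hk1 (by omega), ih (M-1) hk1 (by omega)]
      rw [sum_pascal (fun j => (M - j) * numDerangements (M - 1 - j)) k]
      congr 1
      refine Finset.sum_congr rfl fun j _ => ?_
      congr 2
      · omega
      · congr 1; omega

/-- The recurrence `R(M,i) = s·R(M-1,s-1-part) + (M-s)·R(M-1,s)` (avoidance recurrence). -/
lemma Rv_rec (M s : ℕ) (hs : 1 ≤ s) (hsM : s ≤ M) :
    Rv M s = s * Rv (M-1) (s-1) + (M-s) * Rv (M-1) s := by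
  rw [Rv_eq_sum_mul s M hs hsM]
  have key : ∀ j ∈ Finset.range (s+1),
      s.choose j * ((M - j) * numDerangements (M - 1 - j)) =
        s * ((s-1).choose j * numDerangements (M - 1 - j)) +
          (M - s) * (s.choose j * numDerangements (M - 1 - j)) := by
    intro j hj
    rw [Finset.mem_range] at hj
    have hj' : j ≤ s := by omega
    -- (M - j) = (s - j) + (M - s)
    have hsplit : M - j = (s - j) + (M - s) := by omega
    rw [hsplit, add_mul, mul_add]
    congr 1
    · -- choose s j * ((s-j) * D) = s * (choose (s-1) j * D)
      rw [← mul_assoc, ← mul_assoc]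
      congr 1
      -- s.choose j * (s - j) = s * (s-1).choose j
      rcases Nat.eq_or_lt_of_le hj' with h | h
      · rw [h, Nat.sub_self, mul_zero,
          Nat.choose_eq_zero_of_lt (show s - 1 < s from by omega), mul_zero]
      · have key2 := Nat.add_one_mul_choose_eq (s-1) j
        rw [show s - 1 + 1 = s from by omega] at key2
        -- key2 : s * (s-1).choose j = s.choose (j+1) * (j+1)
        calc s.choose j * (s - j) = s.choose (j+1) * (j+1) := (Nat.choose_succ_right_eq s j).symm
          _ = (j+1) * s.choose (j+1) := by ring
          _ = s * (s-1).choose j := by rw [key2]; ring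
    · ring
  rw [Finset.sum_congr rfl key, Finset.sum_add_distrib, ← Finset.mul_sum, ← Finset.mul_sum]
  congr 1
  · -- ∑_{j≤s} (s-1).choose j * D = Rv (M-1) (s-1) : last term vanishes
    congr 1
    unfold Rv
    rw [show s - 1 + 1 = s from by omega, Finset.sum_range_succ,
      Nat.choose_eq_zero_of_lt (show s - 1 < s from by omega), zero_mul, add_zero]


lemma Rv_self (N : ℕ) : Rv N N = N ! := by
  induction N with
  | zero => simp [Rv, numDerangements_zero]
  | succ k ih =>
    rw [Rv_rec (k+1) (k+1) (by omega) le_rfl]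
    simp only [Nat.add_sub_cancel, Nat.sub_self, zero_mul, add_zero]
    rw [ih, Nat.factorial_succ]

lemma Rv_N_mul_le (N s : ℕ) (hs : 1 ≤ s) (hsN : s ≤ N) :
    N * Rv (N-1) (s-1) ≤ Rv N s := by
  rw [Rv_rec N s hs hsN]
  have h1 : Rv (N-1) (s-1) ≤ Rv (N-1) s := Rv_mono _ (by omega)
  have h2 : N * Rv (N-1) (s-1) = s * Rv (N-1) (s-1) + (N-s) * Rv (N-1) (s-1) := by
    rw [← Nat.add_mul]; congr 1; omega
  rw [h2]
  exact Nat.add_le_add le_rfl (Nat.mul_le_mul_left _ h1)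

lemma Rv_fact (q : ℕ) : Rv (q+1) q + q ! = (q+1)! := by
  have h := Rv_succ (q+1) q
  rw [Nat.add_sub_cancel, Rv_self, Rv_self] at h
  omega

lemma Rv_doubling (N s : ℕ) (hN : 2 ≤ N) (hs : 1 ≤ s) (hsN : s ≤ N) :
    Rv N s ≤ 2 * Rv N (s-1) := by
  set X := Rv N s with hX
  set Y := Rv N (s-1) with hY
  set Z := Rv (N-1) (s-1) with hZ
  have hXYZ : X = Y + Z := by
    have h := Rv_succ N (s-1)
    rw [show s-1+1 = s from by omega] at h
    exact h
  have hZX : N * Z ≤ X := Rv_N_mul_le N s hs hsN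
  have e1 : N * X = N * Y + N * Z := by rw [hXYZ]; ring
  have e2 : N * X ≤ N * Y + X := by linarith
  have e3 : (N-1) * X + X = N * X := by
    rw [← Nat.succ_mul]; congr 1; omega
  have e4 : (N-1) * X ≤ N * Y := by linarith
  have e5 : N * Y ≤ (N-1) * (2 * Y) := by
    calc N * Y ≤ (2*(N-1)) * Y := Nat.mul_le_mul_right Y (by omega)
      _ = (N-1) * (2*Y) := by ring
  exact Nat.le_of_mul_le_mul_left (e4.trans e5) (by omega : 0 < N - 1)

/-- The factorial-side inequality: `Rv (q+1) q + 2·Rv (q-1) (q-2) ≥ 3·Rv q (q-1)` for `q ≥ 3`. -/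
lemma Rv_fact_ineq (q : ℕ) (hq : 3 ≤ q) :
    3 * Rv q (q-1) ≤ Rv (q+1) q + 2 * Rv (q-1) (q-2) := by
  have h1 := Rv_fact q
  have h2 : Rv q (q-1) + (q-1)! = q ! := by
    have := Rv_fact (q-1)
    rw [show q-1+1 = q from by omega] at this
    exact this
  have h3 : Rv (q-1) (q-2) + (q-2)! = (q-1)! := by
    have := Rv_fact (q-2)
    rw [show q-2+1 = q-1 from by omega] at this
    exact this
  have h4 : 4 * q ! ≤ (q+1)! := by
    rw [Nat.factorial_succ]
    exact Nat.mul_le_mul_right _ (by omega)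
  have h5 : (q-2)! ≤ (q-1)! := Nat.factorial_le (by omega)
  omega

open scoped Classical

lemma sum_powerset_numDer (X : Finset ℕ) (N : ℕ) :
    ∑ W ∈ X.powerset, numDerangements (N - W.card) = Rv N X.card := by
  rw [Finset.sum_powerset_apply_card (f := fun k => numDerangements (N - k))]
  simp only [smul_eq_mul]
  rfl

lemma sum_union_powerset (A B : Finset ℕ) (hAB : Disjoint A B) (f : Finset ℕ → ℕ) :
    ∑ S ∈ (A ∪ B).powerset.filter (fun S => A ⊆ S), f S = ∑ W ∈ B.powerset, f (A ∪ W) := by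
  refine Finset.sum_nbij' (fun S => S \ A) (fun W => A ∪ W) ?_ ?_ ?_ ?_ ?_
  · intro S hS
    rw [Finset.mem_filter, Finset.mem_powerset] at hS
    rw [Finset.mem_powerset]
    intro x hx
    rw [Finset.mem_sdiff] at hx
    rcases Finset.mem_union.mp (hS.1 hx.1) with h | h
    · exact absurd h hx.2
    · exact h
  · intro W hW
    rw [Finset.mem_powerset] at hW
    rw [Finset.mem_filter, Finset.mem_powerset]
    exact ⟨Finset.union_subset Finset.subset_union_left
      (hW.trans Finset.subset_union_right), Finset.subset_union_left⟩
  · intro S hS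
    rw [Finset.mem_filter] at hS
    exact Finset.union_sdiff_of_subset hS.2
  · intro W hW
    rw [Finset.mem_powerset] at hW
    exact Finset.union_sdiff_cancel_left (hAB.mono_right hW)
  · intro S hS
    rw [Finset.mem_filter] at hS
    rw [Finset.union_sdiff_of_subset hS.2]

lemma sum_superset_eq_Rv (A B : Finset ℕ) (h : Disjoint A B) (n : ℕ) (hn : A.card ≤ n) :
    ∑ S ∈ (A ∪ B).powerset.filter (fun S => A ⊆ S), numDerangements (n - S.card)
      = Rv (n - A.card) B.card := by
  rw [sum_union_powerset A B h]
  have key : ∀ W ∈ B.powerset, numDerangements (n - (A ∪ W).card)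
      = numDerangements ((n - A.card) - W.card) := by
    intro W hW
    rw [Finset.mem_powerset] at hW
    rw [Finset.card_union_of_disjoint (h.mono_right hW)]
    congr 1
    omega
  rw [Finset.sum_congr rfl key, sum_powerset_numDer]

lemma sum_pattern (L M R : Finset ℕ) (hLM : Disjoint L M) (hLR : Disjoint L R)
    (hMR : Disjoint M R) (k n : ℕ) :
    ∑ S ∈ ((L ∪ M) ∪ R).powerset.filter (fun S => M ⊆ S ∧ (S ∩ L).card = k),
      numDerangements (n - S.card)
      = L.card.choose k * Rv (n - k - M.card) R.card := by
  have inter1 : ∀ U W : Finset ℕ, U ⊆ L → W ⊆ R → ((U ∪ M) ∪ W) ∩ L = U := by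
    intro U W hU hW
    ext x
    simp only [Finset.mem_inter, Finset.mem_union]
    constructor
    · rintro ⟨(h|h)|h, hxL⟩
      · exact h
      · exact absurd hxL (Finset.disjoint_right.mp hLM h)
      · exact absurd hxL (Finset.disjoint_right.mp hLR (hW h))
    · intro h; exact ⟨Or.inl (Or.inl h), hU h⟩
  have inter2 : ∀ U W : Finset ℕ, U ⊆ L → W ⊆ R → ((U ∪ M) ∪ W) ∩ R = W := by
    intro U W hU hW
    ext x
    simp only [Finset.mem_inter, Finset.mem_union]
    constructor
    · rintro ⟨(h|h)|h, hxR⟩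
      · exact absurd hxR (Finset.disjoint_left.mp hLR (hU h))
      · exact absurd hxR (Finset.disjoint_left.mp hMR h)
      · exact h
    · intro h; exact ⟨Or.inr h, hW h⟩
  have himg : ((L ∪ M) ∪ R).powerset.filter (fun S => M ⊆ S ∧ (S ∩ L).card = k)
      = ((L.powersetCard k) ×ˢ R.powerset).image (fun p => (p.1 ∪ M) ∪ p.2) := by
    ext S
    simp only [Finset.mem_filter, Finset.mem_powerset, Finset.mem_image, Finset.mem_product,
      Finset.mem_powersetCard]
    constructor
    · rintro ⟨hsub, hM, hcard⟩
      refine ⟨(S ∩ L, S ∩ R), ⟨⟨Finset.inter_subset_right, hcard⟩, Finset.inter_subset_right⟩, ?_⟩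
      ext x
      simp only [Finset.mem_union, Finset.mem_inter]
      constructor
      · rintro ((⟨h,_⟩|h)|⟨h,_⟩)
        · exact h
        · exact hM h
        · exact h
      · intro hx
        rcases Finset.mem_union.mp (hsub hx) with h' | h'
        · rcases Finset.mem_union.mp h' with h'' | h''
          · exact Or.inl (Or.inl ⟨hx, h''⟩)
          · exact Or.inl (Or.inr h'')
        · exact Or.inr ⟨hx, h'⟩
    · rintro ⟨⟨U, W⟩, ⟨⟨hU, hUcard⟩, hW⟩, rfl⟩
      refine ⟨Finset.union_subset_union (Finset.union_subset_union hU Finset.Subset.rfl) hW,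
        Finset.subset_union_right.trans Finset.subset_union_left, ?_⟩
      rw [inter1 U W hU hW]
      exact hUcard
  rw [himg, Finset.sum_image ?inj]
  case inj =>
    intro p hp q hq heq
    rw [Finset.mem_coe, Finset.mem_product, Finset.mem_powersetCard, Finset.mem_powerset] at hp hq
    have e1 : p.1 = q.1 := by
      rw [← inter1 p.1 p.2 hp.1.1 hp.2, ← inter1 q.1 q.2 hq.1.1 hq.2, (show p.1 ∪ M ∪ p.2 = q.1 ∪ M ∪ q.2 from heq)]
    have e2 : p.2 = q.2 := by
      rw [← inter2 p.1 p.2 hp.1.1 hp.2, ← inter2 q.1 q.2 hq.1.1 hq.2, (show p.1 ∪ M ∪ p.2 = q.1 ∪ M ∪ q.2 from heq)]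
    exact Prod.ext e1 e2
  rw [Finset.sum_product]
  have inner : ∀ U ∈ L.powersetCard k,
      (∑ W ∈ R.powerset, numDerangements (n - ((U ∪ M) ∪ W).card))
        = Rv (n - k - M.card) R.card := by
    intro U hU
    rw [Finset.mem_powersetCard] at hU
    have step : ∀ W ∈ R.powerset, numDerangements (n - ((U ∪ M) ∪ W).card)
        = numDerangements ((n - k - M.card) - W.card) := by
      intro W hW
      rw [Finset.mem_powerset] at hW
      rw [Finset.card_union_of_disjoint, Finset.card_union_of_disjoint (hLM.mono_left hU.1),
        hU.2]
      · congr 1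
        omega
      · exact Finset.disjoint_union_left.mpr
          ⟨(hLR.mono_left hU.1).mono_right hW, hMR.mono_right hW⟩
    rw [Finset.sum_congr rfl step, sum_powerset_numDer]
  rw [Finset.sum_congr rfl inner, Finset.sum_const, Finset.card_powersetCard, smul_eq_mul]


lemma pred_iff (t i : ℕ) (ht : 1 ≤ t) (hi : 1 ≤ i) (S : Finset ℕ) :
    (∃ T ∈ Hfam t i, T ⊆ S) ↔
      ((Finset.Icc 1 t ⊆ S ∧ (S ∩ Finset.Icc (t+1) (t+i)).Nonempty) ∨
        (Finset.Icc (t+1) (t+i) ⊆ S ∧ (S ∩ Finset.Icc 1 t).card = t - 1)) := by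
  set L := Finset.Icc 1 t with hLdef
  set M := Finset.Icc (t+1) (t+i) with hMdef
  have cardL : L.card = t := by rw [hLdef, Nat.card_Icc]; omega
  have cardM : M.card = i := by rw [hMdef, Nat.card_Icc]; omega
  have hLI : L ⊆ Finset.Icc 1 (t+i) := by
    intro x hx; rw [hLdef, Finset.mem_Icc] at hx; rw [Finset.mem_Icc]; omega
  have hMI : M ⊆ Finset.Icc 1 (t+i) := by
    intro x hx; rw [hMdef, Finset.mem_Icc] at hx; rw [Finset.mem_Icc]; omega
  have hdLM : Disjoint L M := by
    rw [Finset.disjoint_left]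
    intro x hx hx'
    rw [hLdef, Finset.mem_Icc] at hx; rw [hMdef, Finset.mem_Icc] at hx'; omega
  constructor
  · rintro ⟨T, hT, hTS⟩
    rw [Hfam, Finset.mem_union, Finset.mem_filter, Finset.mem_filter,
      Finset.mem_powersetCard, Finset.mem_powersetCard] at hT
    rcases hT with ⟨⟨hTsub, hTcard⟩, hLT⟩ | ⟨⟨hTsub, hTcard⟩, hMT⟩
    · left
      refine ⟨hLT.trans hTS, ?_⟩
      have hns : ¬ T ⊆ L := by
        intro h
        have := Finset.card_le_card h
        omega
      obtain ⟨x, hxT, hxL⟩ := Finset.not_subset.mp hns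
      have hxI := hTsub hxT
      rw [Finset.mem_Icc] at hxI
      have hxM : x ∈ M := by
        rw [hMdef, Finset.mem_Icc]
        rw [hLdef, Finset.mem_Icc] at hxL
        omega
      exact ⟨x, Finset.mem_inter.mpr ⟨hTS hxT, hxM⟩⟩
    · have hMS : M ⊆ S := hMT.trans hTS
      have hTsplit : T ∩ L ∪ M = T := by
        ext x
        simp only [Finset.mem_union, Finset.mem_inter]
        constructor
        · rintro (⟨h, _⟩ | h)
          · exact h
          · exact hMT h
        · intro hx
          have := hTsub hx
          rw [Finset.mem_Icc] at this
          by_cases hxL : x ∈ L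
          · exact Or.inl ⟨hx, hxL⟩
          · right
            rw [hLdef, Finset.mem_Icc] at hxL
            rw [hMdef, Finset.mem_Icc]
            omega
      have hTL : (T ∩ L).card = t - 1 := by
        have hd : Disjoint (T ∩ L) M := hdLM.mono_left Finset.inter_subset_right
        have := Finset.card_union_of_disjoint hd
        rw [hTsplit, hTcard, cardM] at this
        omega
      have h1 : t - 1 ≤ (S ∩ L).card := by
        rw [← hTL]
        exact Finset.card_le_card (Finset.inter_subset_inter hTS (le_refl L))
      have h2 : (S ∩ L).card ≤ t := by
        have := Finset.card_le_card (Finset.inter_subset_right (s₁ := S) (s₂ := L))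
        omega
      rcases Nat.eq_or_lt_of_le h2 with he | hl
      · left
        have : S ∩ L = L := Finset.eq_of_subset_of_card_le Finset.inter_subset_right (by omega)
        refine ⟨?_, ⟨t+1, Finset.mem_inter.mpr ⟨hMS ?_, ?_⟩⟩⟩
        · intro x hx
          have : x ∈ S ∩ L := this.symm ▸ hx
          exact (Finset.mem_inter.mp this).1
        · rw [hMdef, Finset.mem_Icc]; omega
        · rw [hMdef, Finset.mem_Icc]; omega
      · right
        exact ⟨hMS, by omega⟩
  · rintro (⟨hLS, ⟨x, hx⟩⟩ | ⟨hMS, hcard⟩)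
    · rw [Finset.mem_inter] at hx
      have hxM := hx.2
      rw [hMdef, Finset.mem_Icc] at hxM
      have hxL : x ∉ L := by rw [hLdef, Finset.mem_Icc]; omega
      refine ⟨insert x L, ?_, ?_⟩
      · rw [Hfam, Finset.mem_union]
        left
        rw [Finset.mem_filter, Finset.mem_powersetCard]
        refine ⟨⟨Finset.insert_subset (by rw [Finset.mem_Icc]; omega) hLI, ?_⟩,
          Finset.subset_insert _ _⟩
        rw [Finset.card_insert_of_notMem hxL, cardL]
      · exact Finset.insert_subset hx.1 hLS
    · refine ⟨(S ∩ L) ∪ M, ?_, ?_⟩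
      · rw [Hfam, Finset.mem_union]
        right
        rw [Finset.mem_filter, Finset.mem_powersetCard]
        refine ⟨⟨Finset.union_subset (Finset.inter_subset_right.trans hLI) hMI, ?_⟩,
          Finset.subset_union_right⟩
        rw [Finset.card_union_of_disjoint (hdLM.mono_left Finset.inter_subset_right),
          hcard, cardM]
        omega
      · exact Finset.union_subset Finset.inter_subset_left hMS


lemma Sfun_formula (n t i : ℕ) (ht : 1 ≤ t) (hi : 2 ≤ i) (hin : t + i ≤ n) :
    Sfun n t i + Rv (n-t) (n-t-i) = (n-t)! + t * Rv (n-t-i+1) (n-t-i) := by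
  set L := Finset.Icc 1 t with hLdef
  set M := Finset.Icc (t+1) (t+i) with hMdef
  set R := Finset.Icc (t+i+1) n with hRdef
  have cardL : L.card = t := by rw [hLdef, Nat.card_Icc]; omega
  have cardM : M.card = i := by rw [hMdef, Nat.card_Icc]; omega
  have cardR : R.card = n - t - i := by rw [hRdef, Nat.card_Icc]; omega
  have hLM : Disjoint L M := by
    rw [Finset.disjoint_left]; intro x hx hx'
    rw [hLdef, Finset.mem_Icc] at hx; rw [hMdef, Finset.mem_Icc] at hx'; omega
  have hLR : Disjoint L R := by
    rw [Finset.disjoint_left]; intro x hx hx'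
    rw [hLdef, Finset.mem_Icc] at hx; rw [hRdef, Finset.mem_Icc] at hx'; omega
  have hMR : Disjoint M R := by
    rw [Finset.disjoint_left]; intro x hx hx'
    rw [hMdef, Finset.mem_Icc] at hx; rw [hRdef, Finset.mem_Icc] at hx'; omega
  have hbase : Finset.Icc 1 n = (L ∪ M) ∪ R := by
    ext x
    simp only [Finset.mem_union, hLdef, hMdef, hRdef, Finset.mem_Icc]
    omega
  -- the split of Sfun
  have hSfun : Sfun n t i =
      (∑ S ∈ ((L ∪ M) ∪ R).powerset.filter (fun S => L ⊆ S ∧ (S ∩ M).Nonempty),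
        numDerangements (n - S.card)) +
      (∑ S ∈ ((L ∪ M) ∪ R).powerset.filter (fun S => M ⊆ S ∧ (S ∩ L).card = t-1),
        numDerangements (n - S.card)) := by
    rw [Sfun, ← Finset.sum_union]
    · apply Finset.sum_congr _ (fun _ _ => rfl)
      rw [← Finset.filter_or]
      ext S
      simp only [Finset.mem_filter, hbase]
      exact and_congr_right fun _ => pred_iff t i ht (by omega) S
    · rw [Finset.disjoint_left]
      intro S h1 h2
      rw [Finset.mem_filter] at h1 h2
      have e1 : S ∩ L = L := Finset.inter_eq_right.mpr h1.2.1
      have e2 := h2.2.2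
      rw [e1, cardL] at e2
      omega
  -- part 2
  have hP2 : (∑ S ∈ ((L ∪ M) ∪ R).powerset.filter (fun S => M ⊆ S ∧ (S ∩ L).card = t-1),
      numDerangements (n - S.card)) = t * Rv (n-t-i+1) (n-t-i) := by
    rw [sum_pattern L M R hLM hLR hMR (t-1) n, cardL, cardM, cardR]
    congr 1
    · rw [← Nat.choose_symm (show t - 1 ≤ t from by omega),
        show t - (t-1) = 1 from by omega, Nat.choose_one_right]
    · congr 1
      omega
  -- part 1 pieces
  have hAll : (∑ S ∈ ((L ∪ M) ∪ R).powerset.filter (fun S => L ⊆ S),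
      numDerangements (n - S.card)) = (n-t)! := by
    rw [Finset.union_assoc]
    rw [sum_superset_eq_Rv L (M ∪ R) (Finset.disjoint_union_right.mpr ⟨hLM, hLR⟩) n
      (by rw [cardL]; omega)]
    rw [Finset.card_union_of_disjoint hMR, cardL, cardM, cardR,
      show i + (n - t - i) = n - t from by omega, Rv_self]
  have hEmpty : (∑ S ∈ ((L ∪ M) ∪ R).powerset.filter
      (fun S => L ⊆ S ∧ ¬ (S ∩ M).Nonempty), numDerangements (n - S.card))
      = Rv (n-t) (n-t-i) := by
    have hset : ((L ∪ M) ∪ R).powerset.filter (fun S => L ⊆ S ∧ ¬ (S ∩ M).Nonempty)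
        = (L ∪ R).powerset.filter (fun S => L ⊆ S) := by
      ext S
      simp only [Finset.mem_filter, Finset.mem_powerset, Finset.not_nonempty_iff_eq_empty]
      constructor
      · rintro ⟨hsub, hLS, hSM⟩
        refine ⟨?_, hLS⟩
        intro x hx
        rcases Finset.mem_union.mp (hsub hx) with h | h
        · rcases Finset.mem_union.mp h with h' | h'
          · exact Finset.mem_union_left _ h'
          · exact absurd (Finset.mem_inter.mpr ⟨hx, h'⟩) (by rw [hSM]; exact Finset.notMem_empty x)
        · exact Finset.mem_union_right _ h
      · rintro ⟨hsub, hLS⟩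
        refine ⟨?_, hLS, ?_⟩
        · intro x hx
          rcases Finset.mem_union.mp (hsub hx) with h | h
          · exact Finset.mem_union_left _ (Finset.mem_union_left _ h)
          · exact Finset.mem_union_right _ h
        · rw [Finset.eq_empty_iff_forall_notMem]
          intro x hx
          rw [Finset.mem_inter] at hx
          rcases Finset.mem_union.mp (hsub hx.1) with h | h
          · exact Finset.disjoint_left.mp hLM h hx.2
          · exact Finset.disjoint_left.mp hMR hx.2 (by exact h) |>.elim
    rw [hset, sum_superset_eq_Rv L R hLR n (by rw [cardL]; omega), cardL, cardR]
  have hSplit : (∑ S ∈ ((L ∪ M) ∪ R).powerset.filter (fun S => L ⊆ S ∧ (S ∩ M).Nonempty),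
        numDerangements (n - S.card)) +
      (∑ S ∈ ((L ∪ M) ∪ R).powerset.filter (fun S => L ⊆ S ∧ ¬ (S ∩ M).Nonempty),
        numDerangements (n - S.card)) =
      (∑ S ∈ ((L ∪ M) ∪ R).powerset.filter (fun S => L ⊆ S),
        numDerangements (n - S.card)) := by
    rw [← Finset.filter_filter, ← Finset.filter_filter]
    exact Finset.sum_filter_add_sum_filter_not _ _ _
  omega

lemma Sfun_lt_iff (n t i : ℕ) (ht : 1 ≤ t) (hi : 2 ≤ i) (hin : t + i + 1 ≤ n) :
    (Sfun n t i < Sfun n t (i+1)) ↔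
      t * Rv (n-t-i+1) (n-t-i) < t * Rv (n-t-i) (n-t-i-1) + Rv (n-t-1) (n-t-i-1) := by
  have F1 := Sfun_formula n t i ht hi (by omega)
  have F2 := Sfun_formula n t (i+1) ht (by omega) (by omega)
  rw [show n - t - (i+1) = n-t-i-1 from by omega,
    show n-t-i-1+1 = n-t-i from by omega] at F2
  have hI1 := Rv_succ (n-t) (n-t-i-1)
  rw [show n-t-i-1+1 = n-t-i from by omega] at hI1
  set X1 := t * Rv (n-t-i+1) (n-t-i)
  set X2 := t * Rv (n-t-i) (n-t-i-1)
  set y0 := Rv (n-t) (n-t-i)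
  set y0' := Rv (n-t) (n-t-i-1)
  set y1 := Rv (n-t-1) (n-t-i-1)
  omega

lemma crit_step (n t i : ℕ) (ht : 1 ≤ t) (hi : 2 ≤ i) (hbound : t + i + 3 ≤ n)
    (hlt : Sfun n t i < Sfun n t (i+1)) : Sfun n t (i+1) < Sfun n t (i+2) := by
  rw [Sfun_lt_iff n t i ht hi (by omega)] at hlt
  rw [show i+2 = (i+1)+1 from rfl, Sfun_lt_iff n t (i+1) ht (by omega) (by omega)]
  rw [show n - t - (i+1) + 1 = n - t - i from by omega,
      show n - t - (i+1) = n - t - i - 1 from by omega,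
      show n - t - i - 1 - 1 = n - t - i - 2 from by omega]
  have hfa : Rv (n-t-1) (n-t-i-1) ≤ 2 * Rv (n-t-1) (n-t-i-1-1) :=
    Rv_doubling (n-t-1) (n-t-i-1) (by omega) (by omega) (by omega)
  rw [show n - t - i - 1 - 1 = n - t - i - 2 from by omega] at hfa
  have hfb := Rv_fact_ineq (n-t-i) (by omega)
  have hfbt : 3 * (t * Rv (n-t-i) (n-t-i-1)) ≤
      t * Rv (n-t-i+1) (n-t-i) + 2 * (t * Rv (n-t-i-1) (n-t-i-2)) := by
    calc 3 * (t * Rv (n-t-i) (n-t-i-1)) = t * (3 * Rv (n-t-i) (n-t-i-1)) := by ring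
      _ ≤ t * (Rv (n-t-i+1) (n-t-i) + 2 * Rv (n-t-i-1) (n-t-i-2)) := Nat.mul_le_mul_left t hfb
      _ = t * Rv (n-t-i+1) (n-t-i) + 2 * (t * Rv (n-t-i-1) (n-t-i-2)) := by ring
  set X1 := t * Rv (n-t-i+1) (n-t-i)
  set X2 := t * Rv (n-t-i) (n-t-i-1)
  set X3 := t * Rv (n-t-i-1) (n-t-i-2)
  set y1 := Rv (n-t-1) (n-t-i-1)
  set y2 := Rv (n-t-1) (n-t-i-2)
  omega

theorem Sfun_convexity_and_max (n t : ℕ) (ht : 1 ≤ t) (hn : t + 3 ≤ n) :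
    (∀ i : ℕ, 2 ≤ i → i + 2 ≤ n - t - 1 →
      Sfun n t i < Sfun n t (i + 1) → Sfun n t (i + 1) < Sfun n t (i + 2)) ∧
    (∀ i : ℕ, 2 ≤ i → i ≤ n - t - 1 →
      Sfun n t i ≤ max (Sfun n t 2) (Sfun n t (n - t - 1))) := by
  constructor
  · intro i hi2 hib hlt
    exact crit_step n t i ht hi2 (by omega) hlt
  · intro i hi2 hile
    by_cases hdec : ∀ j, 2 ≤ j → j < i → Sfun n t (j+1) ≤ Sfun n t j
    · have desc : ∀ k, 2 ≤ k → k ≤ i → Sfun n t k ≤ Sfun n t 2 := by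
        intro k
        induction k with
        | zero => intro h _; exact absurd h (by omega)
        | succ p ih =>
          intro hk2 hki
          rcases Nat.eq_or_lt_of_le hk2 with he | hl
          · rw [← he]
          · exact (hdec p (by omega) (by omega)).trans (ih (by omega) (by omega))
      exact (desc i hi2 le_rfl).trans (le_max_left _ _)
    · push_neg at hdec
      obtain ⟨j, hj2, hji, hjlt⟩ := hdec
      have prop : ∀ k, j ≤ k → k + 1 ≤ n - t - 1 → Sfun n t k < Sfun n t (k+1) := by
        intro k
        induction k with
        | zero => intro h _; exact absurd h (by omega)
        | succ p ih =>
          intro hjk hkb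
          rcases Nat.eq_or_lt_of_le hjk with he | hl
          · rw [← he]; exact hjlt
          · exact crit_step n t p ht (by omega) (by omega) (ih (by omega) (by omega))
      have asc : ∀ k, i ≤ k → k ≤ n - t - 1 → Sfun n t i ≤ Sfun n t k := by
        intro k
        induction k with
        | zero => intro h _; exact absurd h (by omega)
        | succ p ih =>
          intro h1 h2
          rcases Nat.eq_or_lt_of_le h1 with he | hl
          · rw [he]
          · exact (ih (by omega) (by omega)).trans
              (le_of_lt (prop p (by omega) (by omega)))
      exact (asc (n - t - 1) hile le_rfl).trans (le_max_right _ _)
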